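/- Let G = V ⋊ S be a finite group where V is a nontrivial elementary abelian p-group, and let q be a prime different from p. Suppose G has no element of order pq. Regard V as an F_p[S]-module and suppose H is a subgroup of S such that V is isomorphic as F_p[S]-module to the module induced from an F_p[H]-submodule W of V. Then every element of order q in S lies in H. -/

import Mathlib

/-- The multiplicative group structure on `AddAut A` (composition), as in the older Mathlib. -/
instance addAutGroup (A : Type*) [Add A] : Group (AddAut A) where
  mul g h := AddEquiv.trans h g
  one := AddEquiv.refl _
  inv := AddEquiv.symm
  mul_assoc _ _ _ := rfl
  one_mul _ := rfl
  mul_one _ := rfl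
  inv_mul_cancel := AddEquiv.self_trans_symm

private lemma addAut_mul_apply' {A : Type*} [Add A] (f g : AddAut A) (a : A) :
    (f * g) a = f (g a) := rfl

private lemma addAut_one_apply' {A : Type*} [Add A] (a : A) : (1 : AddAut A) a = a := rfl

/-- The canonical homomorphism from additive automorphisms of `V` to multiplicative
automorphisms of `Multiplicative V`. -/
def addAutToMulAut (V : Type*) [AddCommGroup V] : AddAut V →* MulAut (Multiplicative V) where
  toFun e := AddEquiv.toMultiplicative e
  map_one' := rfl
  map_mul' _ _ := rfl

private lemma sdp_ext {N G : Type*} [Group N] [Group G] {φ : G →* MulAut N}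
    {a b : N ⋊[φ] G} (h1 : a.left = b.left) (h2 : a.right = b.right) : a = b := by
  cases a; cases b; cases h1; cases h2; rfl

/-- If `s` has order `q` and fixes a vector `v`, then `v = 0`, because otherwise
`(v, s)` would be an element of order `p * q` in the semidirect product. -/
private lemma aux_fixed_zero {p q : ℕ} (hp : p.Prime) (hq : q.Prime) (hpq : p ≠ q)
    {V : Type} [AddCommGroup V] (hVp : ∀ v : V, p • v = 0)
    {S : Type} [Group S] (φ : S →* AddAut V)
    (hG : ∀ g : Multiplicative V ⋊[(addAutToMulAut V).comp φ] S, orderOf g ≠ p * q)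
    (s : S) (hs : orderOf s = q) (v : V) (hv : φ s v = v) : v = 0 := by
  by_contra hv0
  haveI : Fact p.Prime := ⟨hp⟩
  have hfixpow : ∀ n : ℕ, φ (s ^ n) v = v := by
    intro n
    induction n with
    | zero => simp [addAut_one_apply']
    | succ n ih => rw [pow_succ, map_mul, addAut_mul_apply', hv, ih]
  set g : Multiplicative V ⋊[(addAutToMulAut V).comp φ] S := ⟨Multiplicative.ofAdd v, s⟩
    with hgdef
  have key : ∀ n : ℕ,
      ((addAutToMulAut V).comp φ) (s ^ n) (Multiplicative.ofAdd v) = Multiplicative.ofAdd v :=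
    fun n => congrArg (fun x => Multiplicative.ofAdd x) (hfixpow n)
  have hright : ∀ n : ℕ, (g ^ n).right = s ^ n := by
    intro n
    calc (g ^ n).right = SemidirectProduct.rightHom (g ^ n) := rfl
      _ = (SemidirectProduct.rightHom g) ^ n := map_pow _ g n
      _ = s ^ n := rfl
  have hleft : ∀ n : ℕ, (g ^ n).left = Multiplicative.ofAdd (n • v) := by
    intro n
    induction n with
    | zero => rw [pow_zero, SemidirectProduct.one_left, zero_smul, ofAdd_zero]
    | succ n ih =>
      rw [pow_succ, SemidirectProduct.mul_left, ih, hright]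
      show Multiplicative.ofAdd (n • v) *
        ((addAutToMulAut V).comp φ) (s ^ n) (Multiplicative.ofAdd v) = _
      rw [key n, ← ofAdd_add, ← succ_nsmul]
  have h1 : g ^ (p * q) = 1 := by
    refine sdp_ext ?_ ?_
    · rw [hleft, SemidirectProduct.one_left]
      have hz : (p * q) • v = 0 := by rw [mul_nsmul, hVp, smul_zero]
      rw [hz, ofAdd_zero]
    · rw [hright, SemidirectProduct.one_right]
      exact orderOf_dvd_iff_pow_eq_one.mp (by rw [hs]; exact dvd_mul_left q p)
  have hdvd : orderOf g ∣ p * q := orderOf_dvd_of_pow_eq_one h1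
  have hqd : q ∣ orderOf g := by
    have h2 := orderOf_map_dvd SemidirectProduct.rightHom g
    rwa [show SemidirectProduct.rightHom g = s from rfl, hs] at h2
  have hpd : p ∣ orderOf g := by
    have h3 := congrArg SemidirectProduct.left (pow_orderOf_eq_one g)
    rw [hleft, SemidirectProduct.one_left] at h3
    have h4 : orderOf g • v = 0 := by
      have h5 := congrArg (fun x => Multiplicative.toAdd x) h3
      simpa using h5
    have h6 : addOrderOf v ∣ orderOf g := addOrderOf_dvd_of_nsmul_eq_zero h4
    rwa [addOrderOf_eq_prime (hVp v) hv0] at h6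
  exact hG g (Nat.dvd_antisymm hdvd
    (Nat.Coprime.mul_dvd_of_dvd_of_dvd ((Nat.coprime_primes hp hq).mpr hpq) hpd hqd))

theorem stmt_4 {p q : ℕ} (hp : p.Prime) (hq : q.Prime) (hpq : p ≠ q)
    (V : Type) [AddCommGroup V] [Finite V] [Nontrivial V] (hVp : ∀ v : V, p • v = 0)
    (S : Type) [Group S] [Finite S] (φ : S →* AddAut V)
    (hG : ∀ g : Multiplicative V ⋊[(addAutToMulAut V).comp φ] S, orderOf g ≠ p * q)
    (H : Subgroup S) (W : AddSubgroup V)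
    (hWH : ∀ h ∈ H, ∀ w ∈ W, φ h w ∈ W)
    (T : Finset S) (hT : ∀ s : S, ∃! t : S, t ∈ T ∧ s * t⁻¹ ∈ H)
    (hindep : iSupIndep (fun t : T => W.map ((φ (t : S)).toAddMonoidHom)))
    (hspan : (⨆ t : T, W.map ((φ (t : S)).toAddMonoidHom)) = ⊤) :
    ∀ s : S, orderOf s = q → s ∈ H := by
  classical
  intro s hs
  by_contra hsH
  have hq1 : 1 < q := hq.one_lt
  have hq0 : 0 < q := hq.pos
  -- W is nontrivial
  have hWbot : W ≠ ⊥ := by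
    intro hW
    have htop : (⊤ : AddSubgroup V) = ⊥ := by
      rw [← hspan]
      simp [hW]
    exact absurd htop.symm (by simpa using (AddSubgroup.bot_ne_top (G := V)))
  -- φ h maps W onto W for h ∈ H
  have hWmap : ∀ h : S, h ∈ H → W.map ((φ h).toAddMonoidHom) = W := by
    intro h hh
    apply le_antisymm
    · rintro x ⟨w, hw, rfl⟩
      exact hWH h hh w hw
    · intro w hw
      refine ⟨φ h⁻¹ w, hWH h⁻¹ (inv_mem hh) w hw, ?_⟩
      show φ h (φ h⁻¹ w) = w
      rw [← addAut_mul_apply', ← map_mul, mul_inv_cancel, map_one, addAut_one_apply']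
  -- translates of W only depend on the left coset
  have hcoset : ∀ a b : S, a⁻¹ * b ∈ H →
      W.map ((φ b).toAddMonoidHom) = W.map ((φ a).toAddMonoidHom) := by
    intro a b hab
    have hb : b = a * (a⁻¹ * b) := by rw [← mul_assoc, mul_inv_cancel, one_mul]
    have hcomp : ((φ (a * (a⁻¹ * b))).toAddMonoidHom)
        = ((φ a).toAddMonoidHom).comp ((φ (a⁻¹ * b)).toAddMonoidHom) := by
      rw [map_mul]; rfl
    rw [hb, hcomp, ← AddSubgroup.map_map, hWmap _ hab]
  -- elements of T lie in pairwise distinct left cosets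
  have hinj : ∀ t₁ t₂ : {x // x ∈ T}, (t₁ : S)⁻¹ * (t₂ : S) ∈ H → t₁ = t₂ := by
    intro t₁ t₂ h12
    by_contra hne
    have heq : W.map ((φ (t₁ : S)).toAddMonoidHom) = W.map ((φ (t₂ : S)).toAddMonoidHom) :=
      (hcoset _ _ h12).symm
    have hle : W.map ((φ (t₁ : S)).toAddMonoidHom)
        ≤ ⨆ (j : {x // x ∈ T}) (_ : j ≠ t₁), W.map ((φ (j : S)).toAddMonoidHom) := by
      rw [heq]
      exact le_iSup₂ (f := fun (j : {x // x ∈ T}) (_ : j ≠ t₁) =>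
        W.map ((φ (j : S)).toAddMonoidHom)) t₂ (Ne.symm hne)
    have hbot : W.map ((φ (t₁ : S)).toAddMonoidHom) ≤ ⊥ := (hindep t₁) le_rfl hle
    refine hWbot (le_antisymm ?_ bot_le)
    intro w hw
    have : φ (t₁ : S) w ∈ (⊥ : AddSubgroup V) := hbot ⟨w, hw, rfl⟩
    rw [AddSubgroup.mem_bot] at this
    have hw0 : w = 0 := by
      have := congrArg (φ (t₁ : S)).symm this
      simpa using this
    simpa [hw0] using AddSubgroup.zero_mem (⊥ : AddSubgroup V)
  -- |T| = number of left cosets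
  have hcardT : Nat.card {x // x ∈ T} = Nat.card (S ⧸ H) := by
    have hbij : Function.Bijective
        (fun t : {x // x ∈ T} => (Quotient.mk'' (t : S) : Quotient (QuotientGroup.rightRel H))) := by
      constructor
      · intro t₁ t₂ h12
        have hrel := Quotient.exact' h12
        have hrel2 : (t₂ : S) * (t₁ : S)⁻¹ ∈ H := QuotientGroup.rightRel_apply.mp hrel
        obtain ⟨u, ⟨huT, huH⟩, huniq⟩ := hT (t₂ : S)
        have e1 : (t₂ : S) = u := huniq (t₂ : S) ⟨t₂.2, by rw [mul_inv_cancel]; exact one_mem H⟩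
        have e2 : (t₁ : S) = u := huniq (t₁ : S) ⟨t₁.2, hrel2⟩
        exact Subtype.ext (e2.trans e1.symm)
      · intro y
        refine Quotient.inductionOn' y ?_
        intro a
        obtain ⟨u, ⟨huT, huH⟩, -⟩ := hT a
        exact ⟨⟨u, huT⟩, Quotient.sound' (QuotientGroup.rightRel_apply.mpr huH)⟩
    exact (Nat.card_eq_of_bijective _ hbij).trans
      (Nat.card_congr (QuotientGroup.quotientRightRelEquivQuotientLeftRel H))
  -- the map to left cosets is bijective
  have hθ : Function.Bijective (fun t : {x // x ∈ T} => ((t : S) : S ⧸ H)) := by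
    rw [Nat.bijective_iff_injective_and_card]
    exact ⟨fun t₁ t₂ h12 => hinj t₁ t₂ (QuotientGroup.eq.mp h12), hcardT⟩
  have hrep : ∀ i : ℕ, ∃ t : {x // x ∈ T}, (t : S)⁻¹ * s ^ i ∈ H := by
    intro i
    obtain ⟨t, ht⟩ := hθ.2 ((s ^ i : S) : S ⧸ H)
    exact ⟨t, QuotientGroup.eq.mp ht⟩
  choose tt htt using hrep
  have ht0H : (tt 0 : S) ∈ H := by
    have h0 := htt 0
    rw [pow_zero, mul_one] at h0
    exact inv_mem_iff.mp h0
  have hne0 : ∀ i : ℕ, 0 < i → i < q → tt i ≠ tt 0 := by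
    intro i hi0 hiq hne
    have h1 : (tt i : S)⁻¹ * s ^ i ∈ H := htt i
    have h2 : s ^ i ∈ H := by
      have h3 := H.mul_mem (show (tt i : S) ∈ H from hne ▸ ht0H) h1
      rwa [mul_inv_cancel_left] at h3
    have hcop : Nat.Coprime q i := (hq.coprime_iff_not_dvd).mpr
      (fun hdvd => absurd (Nat.le_of_dvd hi0 hdvd) (not_le.mpr hiq))
    obtain ⟨m, -, hm⟩ := Nat.exists_mul_mod_eq_one_of_coprime hcop.symm hq1
    have hsim : s = (s ^ i) ^ m := by
      calc s = s ^ 1 := (pow_one s).symm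
        _ = s ^ (i * m % q) := by rw [hm]
        _ = s ^ (i * m % orderOf s) := by rw [hs]
        _ = s ^ (i * m) := pow_mod_orderOf s (i * m)
        _ = (s ^ i) ^ m := pow_mul s i m
    exact hsH (by rw [hsim]; exact H.pow_mem h2 m)
  -- a nonzero element of W
  have hex : ∃ w ∈ W, w ≠ (0 : V) := by
    by_contra hcon
    push_neg at hcon
    exact hWbot (le_antisymm
      (fun x hx => (AddSubgroup.mem_bot).mpr (hcon x hx)) bot_le)
  obtain ⟨w, hwW, hw0⟩ := hex
  -- the norm vector
  set F : ℕ → V := fun i => φ (s ^ i) w with hF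
  have hF0 : F 0 = w := by
    show φ (s ^ 0) w = w
    rw [pow_zero, map_one, addAut_one_apply']
  have hsq : s ^ q = 1 := by rw [← hs]; exact pow_orderOf_eq_one s
  have hFq : F q = w := by
    show φ (s ^ q) w = w
    rw [hsq, map_one, addAut_one_apply']
  have hfix : φ s (∑ i ∈ Finset.range q, F i) = ∑ i ∈ Finset.range q, F i := by
    rw [map_sum]
    have hstep : ∀ i ∈ Finset.range q, φ s (F i) = F (i + 1) := by
      intro i _
      show φ s (φ (s ^ i) w) = φ (s ^ (i + 1)) w
      rw [pow_succ', map_mul, addAut_mul_apply']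
    rw [Finset.sum_congr rfl hstep]
    have h7 := Finset.sum_range_succ' F q
    rw [Finset.sum_range_succ, hFq, hF0] at h7
    exact (add_right_cancel h7).symm
  have hv0 : (∑ i ∈ Finset.range q, F i) = 0 :=
    aux_fixed_zero hp hq hpq hVp φ hG s hs _ hfix
  have hsum0 : w + ∑ i ∈ (Finset.range q).erase 0, F i = 0 := by
    calc w + ∑ i ∈ (Finset.range q).erase 0, F i
        = F 0 + ∑ i ∈ (Finset.range q).erase 0, F i := by rw [hF0]
      _ = ∑ i ∈ Finset.range q, F i :=
          Finset.add_sum_erase _ F (Finset.mem_range.mpr hq0)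
      _ = 0 := hv0
  have hwmem : w ∈ W.map ((φ ((tt 0 : S))).toAddMonoidHom) := by
    refine ⟨φ (tt 0 : S)⁻¹ w, hWH _ (inv_mem ht0H) w hwW, ?_⟩
    show φ (tt 0 : S) (φ (tt 0 : S)⁻¹ w) = w
    rw [← addAut_mul_apply', ← map_mul, mul_inv_cancel, map_one, addAut_one_apply']
  have hwmem2 : w ∈ ⨆ (j : {x // x ∈ T}) (_ : j ≠ tt 0),
      W.map ((φ (j : S)).toAddMonoidHom) := by
    have hwe : w = -(∑ i ∈ (Finset.range q).erase 0, F i) :=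
      eq_neg_of_add_eq_zero_left hsum0
    rw [hwe]
    refine AddSubgroup.neg_mem _ (AddSubgroup.sum_mem _ ?_)
    intro i hi
    have hi0 : i ≠ 0 := Finset.ne_of_mem_erase hi
    have hiq : i < q := Finset.mem_range.mp (Finset.mem_of_mem_erase hi)
    have hne := hne0 i (Nat.pos_of_ne_zero hi0) hiq
    have hFmem : F i ∈ W.map ((φ ((tt i : S))).toAddMonoidHom) := by
      refine ⟨φ ((tt i : S)⁻¹ * s ^ i) w, hWH _ (htt i) w hwW, ?_⟩
      show φ (tt i : S) (φ ((tt i : S)⁻¹ * s ^ i) w) = φ (s ^ i) w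
      rw [← addAut_mul_apply', ← map_mul, mul_inv_cancel_left]
    exact (le_iSup₂ (f := fun (j : {x // x ∈ T}) (_ : j ≠ tt 0) =>
      W.map ((φ (j : S)).toAddMonoidHom)) (tt i) hne) hFmem
  exact hw0 (AddSubgroup.disjoint_def.mp (hindep (tt 0)) hwmem hwmem2)
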